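/- The torsion subgroup of the elliptic curve E over ℚ given by y² + xy + y = x³ is isomorphic to ℤ/3ℤ, generated by the point (0,0); in particular (0,0) and (0,-1) are the points of exact order 3 and (0,0) + (0,0) = (0,-1). -/

import Mathlib

/-- The elliptic curve `E : y² + xy + y = x³` over `ℚ`. -/
def Ecurve : WeierstrassCurve ℚ := ⟨1, 0, 1, 0, 0⟩

lemma Ecurve_ns00 : Ecurve.toAffine.Nonsingular 0 0 := by
  simp [WeierstrassCurve.Affine.nonsingular_iff, WeierstrassCurve.Affine.equation_iff, Ecurve]

lemma Ecurve_ns0m1 : Ecurve.toAffine.Nonsingular 0 (-1) := by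
  simp [WeierstrassCurve.Affine.nonsingular_iff, WeierstrassCurve.Affine.equation_iff, Ecurve]

/-- The rational point `(0, 0)` on `E`. -/
noncomputable def P00 : Ecurve.toAffine.Point := WeierstrassCurve.Affine.Point.some _ _ Ecurve_ns00

/-- The rational point `(0, -1)` on `E`. -/
noncomputable def P0m1 : Ecurve.toAffine.Point := WeierstrassCurve.Affine.Point.some _ _ Ecurve_ns0m1

namespace EcurveAux
open WeierstrassCurve.Affine WeierstrassCurve.Affine.Point

lemma Ea1 : Ecurve.toAffine.a₁ = 1 := rfl
lemma Ea2 : Ecurve.toAffine.a₂ = 0 := rfl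
lemma Ea3 : Ecurve.toAffine.a₃ = 1 := rfl
lemma Ea4 : Ecurve.toAffine.a₄ = 0 := rfl
lemma Ea6 : Ecurve.toAffine.a₆ = 0 := rfl

lemma some_eq_some {x1 y1 x2 y2 : ℚ} {h1 : Ecurve.toAffine.Nonsingular x1 y1}
    {h2 : Ecurve.toAffine.Nonsingular x2 y2} (hx : x1 = x2) (hy : y1 = y2) :
    Point.some _ _ h1 = Point.some _ _ h2 := by subst hx; subst hy; rfl

lemma negY_eq (x y : ℚ) : Ecurve.toAffine.negY x y = -y - x - 1 := by
  simp [negY, Ea1, Ea3]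

lemma P00_add_P00 : P00 + P00 = P0m1 := by
  have hy : (0 : ℚ) ≠ Ecurve.toAffine.negY 0 0 := by rw [negY_eq]; norm_num
  rw [P00, add_self_of_Y_ne hy]
  refine some_eq_some ?_ ?_
  · rw [slope_of_Y_ne rfl hy]
    simp [negY_eq, Ea1, Ea2, Ea3, Ea4]
  · rw [slope_of_Y_ne rfl hy]
    simp [addY, negAddY, addX, negY_eq, Ea1, Ea2, Ea3, Ea4]

end EcurveAux

namespace EcurveAux2
open WeierstrassCurve.Affine WeierstrassCurve.Affine.Point EcurveAux

lemma P0m1_add_P00 : P0m1 + P00 = 0 := by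
  have hy : (-1 : ℚ) = Ecurve.toAffine.negY 0 0 := by rw [negY_eq]; norm_num
  rw [P0m1, P00, add_of_Y_eq rfl hy]

lemma P00_ne_zero : P00 ≠ 0 := some_ne_zero _

lemma three_nsmul_P00 : (3 : ℕ) • P00 = 0 := by
  have : (3:ℕ) = 2 + 1 := rfl
  rw [this, add_nsmul, two_nsmul, one_nsmul, P00_add_P00, P0m1_add_P00]

lemma addOrderOf_P00 : addOrderOf P00 = 3 := by
  have : Fact (Nat.Prime 3) := ⟨by norm_num⟩
  exact addOrderOf_eq_prime three_nsmul_P00 P00_ne_zero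

lemma P0m1_eq : P0m1 = P00 + P00 := P00_add_P00.symm

lemma addOrderOf_P0m1 : addOrderOf P0m1 = 3 := by
  have : Fact (Nat.Prime 3) := ⟨by norm_num⟩
  refine addOrderOf_eq_prime ?_ (some_ne_zero _)
  have h3 : P00 + P00 + P00 = 0 := by rw [P00_add_P00, P0m1_add_P00]
  have : (3:ℕ) = 2 + 1 := rfl
  rw [this, add_nsmul, two_nsmul, one_nsmul, P0m1_eq,
    show P00 + P00 + (P00 + P00) + (P00 + P00) = P00 + P00 + P00 + (P00 + P00 + P00) by abel,
    h3, add_zero]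

end EcurveAux2

namespace EcurveNT

lemma rat_cop (x : ℚ) : IsCoprime (x.num) ((x.den : ℤ)) := by
  rw [Int.isCoprime_iff_gcd_eq_one]
  simpa [Int.gcd] using x.reduced

lemma rat_den_pos (x : ℚ) : (0 : ℤ) < (x.den : ℤ) := by exact_mod_cast x.pos

lemma Gq_ne_zero (x : ℚ) : 4*x^3 + x^2 + 2*x + 1 ≠ 0 := by
  intro h
  set a : ℤ := x.num with ha
  set b : ℤ := (x.den : ℤ) with hbdef
  have hb : 0 < b := rat_den_pos x
  have hbQ : (b : ℚ) ≠ 0 := by positivity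
  have hx : (a : ℚ) = x * b := by
    rw [ha, hbdef]
    push_cast
    exact (Rat.mul_den_eq_num x).symm
  have key : 4*a^3*b + a^2*b^2 + 2*a*b^3 + b^4 = 0 := by
    have : ((4*a^3*b + a^2*b^2 + 2*a*b^3 + b^4 : ℤ) : ℚ)
        = (b:ℚ)^4 * (4*x^3 + x^2 + 2*x + 1) := by
      push_cast
      rw [hx]; ring
    rw [h, mul_zero] at this
    exact_mod_cast this
  have hE : 4*a^3 + a^2*b + 2*a*b^2 + b^3 = 0 := by
    have : b * (4*a^3 + a^2*b + 2*a*b^2 + b^3) = 0 := by linear_combination key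
    rcases mul_eq_zero.mp this with h' | h'
    · exact absurd h' hb.ne'
    · exact h'
  have ha_dvd : a ∣ b^3 := ⟨-(4*a^2 + a*b + 2*b^2), by linear_combination hE⟩
  have haU : IsUnit a := ((rat_cop x).pow_right (n := 3)).isUnit_of_dvd ha_dvd
  have hb_dvd : b ∣ 4 * a^3 := ⟨-(a^2 + 2*a*b + b^2), by linear_combination hE⟩
  have hb4 : b ∣ 4 := ((rat_cop x).symm.pow_right (n := 3)).dvd_of_dvd_mul_right hb_dvd
  have hble : b ≤ 4 := Int.le_of_dvd (by norm_num) hb4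
  have hbge : 1 ≤ b := hb
  rcases Int.isUnit_iff.mp haU with h1 | h1 <;> rw [h1] at hE <;> interval_cases b <;> omega

end EcurveNT
namespace EcurveNT

lemma cubic_bound {a b M : ℤ} (ha : |a| ≤ M) (hb : |b| ≤ M) (c3 c2 c1 c0 : ℤ) :
    |c3*a^3 + c2*(a^2*b) + c1*(a*b^2) + c0*b^3| ≤ (|c3| + |c2| + |c1| + |c0|) * M^3 := by
  have hM : 0 ≤ M := le_trans (abs_nonneg a) ha
  have h3a : |a|^3 ≤ M^3 := pow_le_pow_left₀ (abs_nonneg a) ha 3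
  have h3b : |b|^3 ≤ M^3 := pow_le_pow_left₀ (abs_nonneg b) hb 3
  have h2ab : |a|^2 * |b| ≤ M^3 := by
    have h2 : |a|^2 ≤ M^2 := pow_le_pow_left₀ (abs_nonneg a) ha 2
    calc |a|^2 * |b| ≤ M^2 * M := mul_le_mul h2 hb (abs_nonneg b) (by positivity)
      _ = M^3 := by ring
  have hab2 : |a| * |b|^2 ≤ M^3 := by
    have h2 : |b|^2 ≤ M^2 := pow_le_pow_left₀ (abs_nonneg b) hb 2
    calc |a| * |b|^2 ≤ M * M^2 := mul_le_mul ha h2 (by positivity) hM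
      _ = M^3 := by ring
  have A := abs_add_le (c3*a^3 + c2*(a^2*b) + c1*(a*b^2)) (c0*b^3)
  have B := abs_add_le (c3*a^3 + c2*(a^2*b)) (c1*(a*b^2))
  have C := abs_add_le (c3*a^3) (c2*(a^2*b))
  have m1 : |c3*a^3| = |c3| * |a|^3 := by simp [abs_mul, abs_pow]
  have m2 : |c2*(a^2*b)| = |c2| * (|a|^2 * |b|) := by simp [abs_mul, abs_pow]
  have m3 : |c1*(a*b^2)| = |c1| * (|a| * |b|^2) := by simp [abs_mul, abs_pow]
  have m4 : |c0*b^3| = |c0| * |b|^3 := by simp [abs_mul, abs_pow]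
  have n1 : |c3| * |a|^3 ≤ |c3| * M^3 := mul_le_mul_of_nonneg_left h3a (abs_nonneg c3)
  have n2 : |c2| * (|a|^2 * |b|) ≤ |c2| * M^3 := mul_le_mul_of_nonneg_left h2ab (abs_nonneg c2)
  have n3 : |c1| * (|a| * |b|^2) ≤ |c1| * M^3 := mul_le_mul_of_nonneg_left hab2 (abs_nonneg c1)
  have n4 : |c0| * |b|^3 ≤ |c0| * M^3 := mul_le_mul_of_nonneg_left h3b (abs_nonneg c0)
  have goal_eq : (c3*a^3 + c2*(a^2*b) + c1*(a*b^2)) + c0*b^3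
      = c3*a^3 + c2*(a^2*b) + c1*(a*b^2) + c0*b^3 := by ring
  rw [goal_eq] at A
  have expand : (|c3| + |c2| + |c1| + |c0|) * M^3
      = |c3| * M^3 + |c2| * M^3 + |c1| * M^3 + |c0| * M^3 := by ring
  linarith

lemma height_growth (x X : ℚ)
    (hX : X = (x^4 - x^2 - 2*x) / (4*x^3 + x^2 + 2*x + 1)) :
    (max |x.num| (x.den:ℤ))^4 ≤ 136 * max |X.num| (X.den:ℤ) := by
  set a : ℤ := x.num with hadef
  set b : ℤ := (x.den : ℤ) with hbdef
  have hb : 0 < b := rat_den_pos x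
  have hbQ : (b : ℚ) ≠ 0 := by positivity
  have hxab : (a : ℚ) = x * b := by
    rw [hadef, hbdef]; push_cast; exact (Rat.mul_den_eq_num x).symm
  set FZ : ℤ := a^4 - a^2*b^2 - 2*a*b^3 with hFZ
  set GZ : ℤ := 4*a^3*b + a^2*b^2 + 2*a*b^3 + b^4 with hGZ
  have hGq : (4*x^3 + x^2 + 2*x + 1 : ℚ) ≠ 0 := Gq_ne_zero x
  have hFZQ : (FZ : ℚ) = (b:ℚ)^4 * (x^4 - x^2 - 2*x) := by
    rw [hFZ]; push_cast; rw [hxab]; ring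
  have hGZQ : (GZ : ℚ) = (b:ℚ)^4 * (4*x^3 + x^2 + 2*x + 1) := by
    rw [hGZ]; push_cast; rw [hxab]; ring
  have hGZ0 : GZ ≠ 0 := by
    intro h0
    rw [h0, Int.cast_zero] at hGZQ
    rcases mul_eq_zero.mp hGZQ.symm with h' | h'
    · exact absurd h' (by positivity)
    · exact hGq h'
  have hGZQ0 : (GZ : ℚ) ≠ 0 := Int.cast_ne_zero.mpr hGZ0
  have hXeq : X = (FZ : ℚ) / (GZ : ℚ) := by
    rw [hX, hFZQ, hGZQ, mul_div_mul_left _ _ (by positivity : ((b:ℚ))^4 ≠ 0)]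
  have hcross : X.num * GZ = FZ * (X.den : ℤ) := by
    have hXd : ((X.den : ℚ)) ≠ 0 := by
      exact_mod_cast X.pos.ne'
    have h := hXeq
    rw [← Rat.num_div_den X] at h
    rw [div_eq_div_iff hXd hGZQ0] at h
    exact_mod_cast h
  have hddvd : (X.den : ℤ) ∣ GZ := by
    refine (rat_cop X).symm.dvd_of_dvd_mul_left ⟨FZ, ?_⟩
    linear_combination hcross
  obtain ⟨d, hd⟩ := hddvd
  have hFZd : FZ = X.num * d := by
    have hden0 : (X.den : ℤ) ≠ 0 := (rat_den_pos X).ne'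
    have h2 : (X.den : ℤ) * (X.num * d) = (X.den:ℤ) * FZ := by
      rw [hd] at hcross; linear_combination hcross
    exact (mul_left_cancel₀ hden0 h2).symm
  have hd0 : d ≠ 0 := by rintro rfl; rw [mul_zero] at hd; exact hGZ0 hd
  have hdFZ : d ∣ FZ := ⟨X.num, by rw [hFZd]; ring⟩
  have hdGZ : d ∣ GZ := ⟨(X.den:ℤ), by rw [hd]; ring⟩
  have id1 : (48*a^2*b + 8*a*b^2 + 31*b^3) * FZ + (-12*a^3 + a^2*b + 10*a*b^2 + 26*b^3) * GZ
      = 26 * b^7 := by rw [hFZ, hGZ]; ring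
  have id2 : (26*a^3 + 4*a^2*b + 11*a*b^2 + 6*b^3) * FZ + (-a^3 + 4*a^2*b + 12*a*b^2) * GZ
      = 26 * a^7 := by rw [hFZ, hGZ]; ring
  have hd26b : d ∣ 26 * b^7 := by rw [← id1]; exact dvd_add (hdFZ.mul_left _) (hdGZ.mul_left _)
  have hd26a : d ∣ 26 * a^7 := by rw [← id2]; exact dvd_add (hdFZ.mul_left _) (hdGZ.mul_left _)
  obtain ⟨u, v, huv⟩ : IsCoprime (a^7) (b^7) := ((rat_cop x).pow_left).pow_right
  have hd26 : d ∣ 26 := by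
    have h26 : (26 : ℤ) = u * (26 * a^7) + v * (26 * b^7) := by linear_combination 26 * huv.symm
    rw [h26]
    exact dvd_add (hd26a.mul_left _) (hd26b.mul_left _)
  have hdabs : |d| ≤ 26 := Int.le_of_dvd (by norm_num) ((abs_dvd d 26).mpr hd26)
  set M : ℤ := max |a| b with hM
  have haM : |a| ≤ M := le_max_left _ _
  have hbM : b ≤ M := le_max_right _ _
  have hbMabs : |b| ≤ M := by rwa [abs_of_pos hb]
  have hM1 : 1 ≤ M := le_trans hb hbM
  set K : ℤ := max |FZ| |GZ| with hK
  have hFK : |FZ| ≤ K := le_max_left _ _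
  have hGK : |GZ| ≤ K := le_max_right _ _
  have hK0 : 0 ≤ K := le_trans (abs_nonneg FZ) hFK
  have hMK0 : (0:ℤ) ≤ M^3 * K := mul_nonneg (by positivity) hK0
  have bound : ∀ c3 c2 c1 c0 S Z : ℤ, |c3| + |c2| + |c1| + |c0| = S → |Z| ≤ K →
      |(c3*a^3 + c2*(a^2*b) + c1*(a*b^2) + c0*b^3) * Z| ≤ S * (M^3 * K) := by
    intro c3 c2 c1 c0 S Z hS hZ
    rw [abs_mul, ← hS]
    calc |c3*a^3 + c2*(a^2*b) + c1*(a*b^2) + c0*b^3| * |Z|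
        ≤ ((|c3| + |c2| + |c1| + |c0|) * M^3) * K :=
          mul_le_mul (cubic_bound haM hbMabs c3 c2 c1 c0) hZ (abs_nonneg Z) (by positivity)
      _ = (|c3| + |c2| + |c1| + |c0|) * (M^3 * K) := by ring
  have e1 : (0:ℤ)*a^3 + 48*(a^2*b) + 8*(a*b^2) + 31*b^3
      = 48*a^2*b + 8*a*b^2 + 31*b^3 := by ring
  have e2 : (-12:ℤ)*a^3 + 1*(a^2*b) + 10*(a*b^2) + 26*b^3
      = -12*a^3 + a^2*b + 10*a*b^2 + 26*b^3 := by ring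
  have e3 : (26:ℤ)*a^3 + 4*(a^2*b) + 11*(a*b^2) + 6*b^3
      = 26*a^3 + 4*a^2*b + 11*a*b^2 + 6*b^3 := by ring
  have e4 : (-1:ℤ)*a^3 + 4*(a^2*b) + 12*(a*b^2) + 0*b^3
      = -a^3 + 4*a^2*b + 12*a*b^2 := by ring
  have b1 := bound 0 48 8 31 87 FZ (by norm_num) hFK
  have b2 := bound (-12) 1 10 26 49 GZ (by norm_num) hGK
  have b3 := bound 26 4 11 6 47 FZ (by norm_num) hFK
  have b4 := bound (-1) 4 12 0 17 GZ (by norm_num) hGK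
  rw [e1] at b1; rw [e2] at b2; rw [e3] at b3; rw [e4] at b4
  have hKM : 26 * M^7 ≤ 136 * (M^3 * K) := by
    rcases le_total |a| b with hcase | hcase
    · have hMb : M = b := by rw [hM, max_eq_right hcase]
      calc 26 * M^7 = |26 * b^7| := by rw [hMb, abs_of_pos (by positivity)]
        _ = |(48*a^2*b + 8*a*b^2 + 31*b^3) * FZ
              + (-12*a^3 + a^2*b + 10*a*b^2 + 26*b^3) * GZ| := by rw [id1]
        _ ≤ |(48*a^2*b + 8*a*b^2 + 31*b^3) * FZ|
              + |(-12*a^3 + a^2*b + 10*a*b^2 + 26*b^3) * GZ| := abs_add_le _ _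
        _ ≤ 87 * (M^3 * K) + 49 * (M^3 * K) := add_le_add b1 b2
        _ = 136 * (M^3 * K) := by ring
    · have hMa : M = |a| := by rw [hM, max_eq_left hcase]
      calc 26 * M^7 = |26 * a^7| := by rw [hMa, abs_mul, abs_pow]; norm_num
        _ = |(26*a^3 + 4*a^2*b + 11*a*b^2 + 6*b^3) * FZ
              + (-a^3 + 4*a^2*b + 12*a*b^2) * GZ| := by rw [id2]
        _ ≤ |(26*a^3 + 4*a^2*b + 11*a*b^2 + 6*b^3) * FZ|
              + |(-a^3 + 4*a^2*b + 12*a*b^2) * GZ| := abs_add_le _ _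
        _ ≤ 47 * (M^3 * K) + 17 * (M^3 * K) := add_le_add b3 b4
        _ = 64 * (M^3 * K) := by ring
        _ ≤ 136 * (M^3 * K) := by
            have := mul_le_mul_of_nonneg_right (by norm_num : (64:ℤ) ≤ 136) hMK0
            linarith [this]
  have hMK : 13 * M^4 ≤ 68 * K := by
    have hpos : (0:ℤ) < 2 * M^3 := by positivity
    have h2 : 13*M^4 * (2*M^3) ≤ 68*K * (2*M^3) := by
      calc 13*M^4 * (2*M^3) = 26 * M^7 := by ring
        _ ≤ 136 * (M^3 * K) := hKM
        _ = 68*K * (2*M^3) := by ring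
    exact le_of_mul_le_mul_right h2 hpos
  set H : ℤ := max |X.num| ((X.den:ℤ)) with hH
  have hH0 : 0 ≤ H := le_trans (abs_nonneg _) (le_max_left _ _)
  have hKH : K ≤ 26 * H := by
    have hnum : |FZ| ≤ 26 * H := by
      rw [hFZd, abs_mul]
      calc |X.num| * |d| ≤ H * 26 :=
            mul_le_mul (le_max_left _ _) hdabs (abs_nonneg d) hH0
        _ = 26 * H := by ring
    have hden : |GZ| ≤ 26 * H := by
      rw [hd, abs_mul, abs_of_pos (rat_den_pos X)]
      calc (X.den:ℤ) * |d| ≤ H * 26 :=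
            mul_le_mul (le_max_right _ _) hdabs (abs_nonneg d) hH0
        _ = 26 * H := by ring
    exact max_le hnum hden
  have hfinal : 13 * M^4 ≤ 13 * (136 * H) := by
    calc 13 * M^4 ≤ 68 * K := hMK
      _ ≤ 68 * (26 * H) := by
          have := mul_le_mul_of_nonneg_left hKH (by norm_num : (0:ℤ) ≤ 68)
          linarith [this]
      _ = 13 * (136 * H) := by ring
  exact le_of_mul_le_mul_left hfinal (by norm_num)

end EcurveNT
namespace EcurveNT

set_option maxHeartbeats 1000000 in
lemma sq_check : ∀ a ∈ Finset.Icc (-5:ℤ) 5, ∀ b ∈ Finset.Icc (1:ℤ) 5, ∀ c ∈ Finset.Icc (0:ℤ) 71,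
    a = 0 ∨ c^2 ≠ 4*a^3*b + a^2*b^2 + 2*a*b^3 + b^4 := by decide

lemma no_small_point {a b c : ℤ} (ha : |a| ≤ 5) (ha0 : a ≠ 0) (hb1 : 1 ≤ b) (hb5 : b ≤ 5)
    (hc : c^2 = 4*a^3*b + a^2*b^2 + 2*a*b^3 + b^4) : False := by
  obtain ⟨haL, haR⟩ := abs_le.mp ha
  have hcsq : |c|^2 = 4*a^3*b + a^2*b^2 + 2*a*b^3 + b^4 := by rwa [sq_abs]
  have hb' : |b| ≤ 5 := by rw [abs_of_pos (by omega)]; omega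
  have p3a : |a|^3 ≤ 125 := by
    calc |a|^3 ≤ 5^3 := pow_le_pow_left₀ (abs_nonneg a) ha 3
      _ = 125 := by norm_num
  have p2a : |a|^2 ≤ 25 := by
    calc |a|^2 ≤ 5^2 := pow_le_pow_left₀ (abs_nonneg a) ha 2
      _ = 25 := by norm_num
  have p3b : |b|^3 ≤ 125 := by
    calc |b|^3 ≤ 5^3 := pow_le_pow_left₀ (abs_nonneg b) hb' 3
      _ = 125 := by norm_num
  have p2b : |b|^2 ≤ 25 := by
    calc |b|^2 ≤ 5^2 := pow_le_pow_left₀ (abs_nonneg b) hb' 2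
      _ = 25 := by norm_num
  have p4b : |b|^4 ≤ 625 := by
    calc |b|^4 ≤ 5^4 := pow_le_pow_left₀ (abs_nonneg b) hb' 4
      _ = 625 := by norm_num
  have t1 : |4*a^3*b| ≤ 2500 := by
    have e : |4*a^3*b| = 4 * (|a|^3 * |b|) := by
      rw [abs_mul, abs_mul, abs_pow]; norm_num; ring
    rw [e]
    nlinarith [abs_nonneg a, abs_nonneg b]
  have t2 : |a^2*b^2| ≤ 625 := by
    have e : |a^2*b^2| = |a|^2 * |b|^2 := by rw [abs_mul, abs_pow, abs_pow]
    rw [e]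
    nlinarith [abs_nonneg a, abs_nonneg b]
  have t3 : |2*a*b^3| ≤ 1250 := by
    have e : |2*a*b^3| = 2 * (|a| * |b|^3) := by
      rw [abs_mul, abs_mul, abs_pow]; norm_num; ring
    rw [e]
    nlinarith [abs_nonneg a, abs_nonneg b]
  have t4 : |b^4| ≤ 625 := by rwa [abs_pow]
  have habs : 4*a^3*b + a^2*b^2 + 2*a*b^3 + b^4 ≤ 5000 := by
    have h1 := le_abs_self (4*a^3*b + a^2*b^2 + 2*a*b^3 + b^4)
    have h2 := abs_add_le (4*a^3*b + a^2*b^2 + 2*a*b^3) (b^4)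
    have h3 := abs_add_le (4*a^3*b + a^2*b^2) (2*a*b^3)
    have h4 := abs_add_le (4*a^3*b) (a^2*b^2)
    linarith
  have hcbound : |c| ≤ 71 := by nlinarith [abs_nonneg c]
  have := sq_check a (by rw [Finset.mem_Icc]; omega) b (by rw [Finset.mem_Icc]; omega)
    |c| (by rw [Finset.mem_Icc]; exact ⟨abs_nonneg c, hcbound⟩)
  rcases this with h | h
  · exact ha0 h
  · exact h hcsq

end EcurveNT
namespace EcurveGeo
open WeierstrassCurve.Affine WeierstrassCurve.Affine.Point EcurveAux EcurveNT

lemma eqn_of {x y : ℚ} (h : Ecurve.toAffine.Nonsingular x y) : y^2 + x*y + y = x^3 := by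
  have h1 := (Ecurve.toAffine.equation_iff x y).mp h.1
  rw [Ea1, Ea2, Ea3, Ea4, Ea6] at h1
  linear_combination h1

lemma w_ne_zero {x y : ℚ} (h : Ecurve.toAffine.Nonsingular x y) : 2*y + x + 1 ≠ 0 := by
  intro h0
  apply Gq_ne_zero x
  have heq := eqn_of h
  linear_combination (2*y + x + 1) * h0 - 4 * heq

lemma y_ne_negY {x y : ℚ} (h : Ecurve.toAffine.Nonsingular x y) :
    y ≠ Ecurve.toAffine.negY x y := by
  rw [negY_eq]
  intro he
  exact w_ne_zero h (by linarith)

lemma doubleX {x y : ℚ} (h : Ecurve.toAffine.Nonsingular x y) :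
    Ecurve.toAffine.addX x x (Ecurve.toAffine.slope x x y y)
      = (x^4 - x^2 - 2*x) / (4*x^3 + x^2 + 2*x + 1) := by
  have heq := eqn_of h
  have hw : 2*y + x + 1 ≠ 0 := w_ne_zero h
  have hG : (4*x^3 + x^2 + 2*x + 1 : ℚ) ≠ 0 := Gq_ne_zero x
  rw [slope_of_Y_ne rfl (y_ne_negY h), WeierstrassCurve.Affine.addX,
    negY_eq, Ea1, Ea2, Ea4]
  rw [show y - (-y - x - 1) = 2*y + x + 1 by ring]
  rw [eq_div_iff hG]
  field_simp
  linear_combination ((-1 - 8*x)*(4*x^3 + x^2 + 2*x + 1) - 4*x*(x^3 - x - 2)) * heq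

end EcurveGeo
namespace EcurveGeo
open WeierstrassCurve.Affine WeierstrassCurve.Affine.Point EcurveAux EcurveAux2 EcurveNT

noncomputable def xc : Ecurve.toAffine.Point → ℚ
  | .zero => 0
  | .some x _ _ => x

noncomputable def Hp (P : Ecurve.toAffine.Point) : ℤ := max |(xc P).num| ((xc P).den : ℤ)

lemma xc_some {x y : ℚ} (h : Ecurve.toAffine.Nonsingular x y) : xc (Point.some _ _ h) = x := rfl

lemma Hp_some {x y : ℚ} (h : Ecurve.toAffine.Nonsingular x y) :
    Hp (Point.some _ _ h) = max |x.num| ((x.den : ℤ)) := rfl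

lemma Hp_growth {x y : ℚ} (h : Ecurve.toAffine.Nonsingular x y) :
    (max |x.num| ((x.den:ℤ)))^4 ≤ 136 * Hp (Point.some _ _ h + Point.some _ _ h) := by
  rw [add_self_of_Y_ne (y_ne_negY h), Hp_some]
  exact height_growth x _ (doubleX h)

lemma Hp_pos (P : Ecurve.toAffine.Point) : 1 ≤ Hp P := by
  have := rat_den_pos (xc P)
  exact le_trans this (le_max_right _ _)

lemma Hp_lt {Q : Ecurve.toAffine.Point} (hQ : Q ≠ 0) (h6 : 6 ≤ Hp Q) :
    Q + Q ≠ 0 ∧ Hp Q < Hp (Q + Q) := by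
  induction Q with
  | zero => exact absurd rfl hQ
  | @some x y h =>
    constructor
    · rw [add_self_of_Y_ne (y_ne_negY h)]
      exact some_ne_zero _
    · have hg := Hp_growth h
      rw [Hp_some] at h6 ⊢
      set M : ℤ := max |x.num| ((x.den:ℤ)) with hM
      have h3 : 216 ≤ M^3 := by
        have := pow_le_pow_left₀ (by norm_num : (0:ℤ) ≤ 6) h6 3
        norm_num at this; linarith
      have h4 : 216 * M ≤ M^4 := by
        have hM0 : (0:ℤ) ≤ M := by linarith
        have := mul_le_mul_of_nonneg_right h3 hM0
        calc 216 * M ≤ M^3 * M := this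
          _ = M^4 := by ring
      linarith

lemma torsion_height {Q : Ecurve.toAffine.Point}
    (hQ : IsOfFinAddOrder Q) (hQ0 : Q ≠ 0) : Hp Q ≤ 5 := by
  by_contra hcon
  push_neg at hcon
  have h6 : 6 ≤ Hp Q := hcon
  let f : ℕ → Ecurve.toAffine.Point := fun n => Nat.rec Q (fun _ P => P + P) n
  have hf0 : f 0 = Q := rfl
  have hfs : ∀ n, f (n+1) = f n + f n := fun n => rfl
  have key : ∀ n, f n ≠ 0 ∧ 6 ≤ Hp (f n) := by
    intro n
    induction n with
    | zero => exact ⟨hQ0, h6⟩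
    | succ m ih =>
      obtain ⟨h1, h2⟩ := ih
      obtain ⟨h3, h4⟩ := Hp_lt h1 h2
      rw [hfs]
      exact ⟨h3, by linarith⟩
  have mono : StrictMono (fun n => Hp (f n)) := by
    apply strictMono_nat_of_lt_succ
    intro n
    rw [hfs]
    exact (Hp_lt (key n).1 (key n).2).2
  have hinj : Function.Injective f := by
    intro m n hmn
    exact mono.injective (by simp only [hmn])
  have hmem : ∀ n, f n ∈ AddSubgroup.zmultiples Q := by
    intro n
    induction n with
    | zero => exact AddSubgroup.mem_zmultiples Q
    | succ m ih => rw [hfs]; exact add_mem ih ih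
  have hfin : Set.Finite (AddSubgroup.zmultiples Q : Set Ecurve.toAffine.Point) := hQ.finite_zmultiples
  exact (hfin.subset (Set.range_subset_iff.mpr hmem)).not_infinite
    (Set.infinite_range_of_injective hinj)

lemma num_eq_mul_den (x : ℚ) : (x.num : ℚ) = x * (x.den : ℚ) := by
  exact (Rat.mul_den_eq_num x).symm

lemma torsion_mem {Q : Ecurve.toAffine.Point}
    (hQ : IsOfFinAddOrder Q) : Q ∈ AddSubgroup.zmultiples P00 := by
  induction Q with
  | zero => exact zero_mem _
  | @some x y h =>
    have hH : Hp (Point.some _ _ h) ≤ 5 := torsion_height hQ (some_ne_zero h)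
    rw [Hp_some] at hH
    have hnum : |x.num| ≤ 5 := le_trans (le_max_left _ _) hH
    have hden : (x.den : ℤ) ≤ 5 := le_trans (le_max_right _ _) hH
    have heq := eqn_of h
    by_cases hx0 : x.num = 0
    · -- x = 0
      have hx : x = 0 := by
        rwa [Rat.num_eq_zero] at hx0
      subst hx
      have hy : y = 0 ∨ y = -1 := by
        have h2 : y * (y + 1) = 0 := by linear_combination heq
        rcases mul_eq_zero.mp h2 with h' | h'
        · exact Or.inl h'
        · exact Or.inr (by linarith)
      rcases hy with rfl | rfl
      · have : Point.some _ _ h = P00 := some_eq_some rfl rfl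
        rw [this]
        exact AddSubgroup.mem_zmultiples P00
      · have : Point.some _ _ h = P0m1 := some_eq_some rfl rfl
        rw [this, P0m1_eq]
        exact add_mem (AddSubgroup.mem_zmultiples P00) (AddSubgroup.mem_zmultiples P00)
    · -- x ≠ 0 : contradiction
      exfalso
      set a : ℤ := x.num with hadef
      set b : ℤ := (x.den : ℤ) with hbdef
      have hb1 : (1:ℤ) ≤ b := rat_den_pos x
      have hw2 : (2*y + x + 1)^2 = 4*x^3 + x^2 + 2*x + 1 := by linear_combination 4 * heq
      set q : ℚ := (x.den : ℚ)^2 * (2*y + x + 1) with hqdef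
      have hxab : (a : ℚ) = x * b := by
        rw [hadef, hbdef]; push_cast; exact num_eq_mul_den x
      have hq2 : q^2 = ((4*a^3*b + a^2*b^2 + 2*a*b^3 + b^4 : ℤ) : ℚ) := by
        push_cast
        rw [hqdef, mul_pow, hw2]
        rw [hxab]
        push_cast [hbdef]
        ring
      have hqden : q.den = 1 := by
        have h1 : (q^2).den = 1 := by rw [hq2]; exact Rat.den_intCast _
        rw [Rat.den_pow] at h1
        nlinarith [q.pos, h1]
      have hqint : ((q.num : ℚ)) = q := by
        conv_rhs => rw [← Rat.num_div_den q]
        rw [hqden]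
        simp
      have hc : q.num^2 = 4*a^3*b + a^2*b^2 + 2*a*b^3 + b^4 := by
        have : ((q.num^2 : ℤ) : ℚ) = ((4*a^3*b + a^2*b^2 + 2*a*b^3 + b^4 : ℤ) : ℚ) := by
          push_cast
          rw [hqint, hq2]
          push_cast
          ring
        exact_mod_cast this
      exact no_small_point hnum hx0 hb1 hden hc

end EcurveGeo

section Final
open WeierstrassCurve.Affine WeierstrassCurve.Affine.Point EcurveAux EcurveAux2 EcurveGeo

lemma P00_finOrder : IsOfFinAddOrder P00 := by
  rw [← addOrderOf_pos_iff, addOrderOf_P00]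
  norm_num

lemma torsion_eq : AddCommGroup.torsion Ecurve.toAffine.Point = AddSubgroup.zmultiples P00 := by
  apply le_antisymm
  · intro Q hQ
    exact torsion_mem ((AddCommGroup.mem_torsion Q).mp hQ)
  · rw [AddSubgroup.zmultiples_le]
    exact (AddCommGroup.mem_torsion P00).mpr P00_finOrder

lemma zmult_cyclic : IsAddCyclic ↥(AddSubgroup.zmultiples P00) := by
  constructor
  refine ⟨⟨P00, AddSubgroup.mem_zmultiples P00⟩, ?_⟩
  rintro ⟨g, hg⟩
  obtain ⟨n, hn⟩ := (AddSubgroup.mem_zmultiples_iff).mp hg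
  refine (AddSubgroup.mem_zmultiples_iff).mpr ⟨n, ?_⟩
  ext
  simpa using hn


/-- The torsion subgroup of the elliptic curve `E : y² + xy + y = x³` over `ℚ` is
isomorphic to `ℤ/3ℤ` and is generated by `(0,0)`; the points `(0,0)` and `(0,-1)` have
exact order `3`, and `(0,0) + (0,0) = (0,-1)`. -/
theorem Ecurve_torsion :
    addOrderOf P00 = 3 ∧ addOrderOf P0m1 = 3 ∧ P00 + P00 = P0m1 ∧
      AddCommGroup.torsion Ecurve.toAffine.Point = AddSubgroup.zmultiples P00 ∧
      Nonempty (AddCommGroup.torsion Ecurve.toAffine.Point ≃+ ZMod 3) := by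
  refine ⟨addOrderOf_P00, addOrderOf_P0m1, P00_add_P00, torsion_eq, ?_⟩
  have hcard : Nat.card ↥(AddSubgroup.zmultiples P00) = 3 := by
    rw [Nat.card_zmultiples, addOrderOf_P00]
  have e := (zmodAddCyclicAddEquiv zmult_cyclic).symm
  rw [hcard] at e
  rw [torsion_eq]
  exact ⟨e⟩

end Final
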